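/- arXiv:0709.3242 — 3 statements merged into one kernel-verified Lean document; each statement's English description precedes it below -/
import Mathlib

section
/- The set of zero divisors (the null cone) of the bicomplex numbers equals {z·(i1 + i2) : z ∈ ℂ(i1)} ∪ {z·(i1 - i2) : z ∈ ℂ(i1)}. -/
/-- Bicomplex numbers `T = {z₁ + z₂·i₂ : z₁, z₂ ∈ ℂ(i₁)}`,
represented by their two `ℂ(i₁)`-components. -/
@[ext]
structure Bicomplex where
  z1 : ℂ
  z2 : ℂ

namespace Bicomplex

instance : Zero Bicomplex := ⟨⟨0, 0⟩⟩
instance : One Bicomplex := ⟨⟨1, 0⟩⟩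
instance : Add Bicomplex := ⟨fun a b => ⟨a.z1 + b.z1, a.z2 + b.z2⟩⟩
instance : Neg Bicomplex := ⟨fun a => ⟨-a.z1, -a.z2⟩⟩
instance : Mul Bicomplex :=
  ⟨fun a b => ⟨a.z1 * b.z1 - a.z2 * b.z2, a.z1 * b.z2 + a.z2 * b.z1⟩⟩

@[simp] theorem zero_z1 : (0 : Bicomplex).z1 = 0 := rfl
@[simp] theorem zero_z2 : (0 : Bicomplex).z2 = 0 := rfl
@[simp] theorem one_z1 : (1 : Bicomplex).z1 = 1 := rfl
@[simp] theorem one_z2 : (1 : Bicomplex).z2 = 0 := rfl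
@[simp] theorem add_z1 (a b : Bicomplex) : (a + b).z1 = a.z1 + b.z1 := rfl
@[simp] theorem add_z2 (a b : Bicomplex) : (a + b).z2 = a.z2 + b.z2 := rfl
@[simp] theorem neg_z1 (a : Bicomplex) : (-a).z1 = -a.z1 := rfl
@[simp] theorem neg_z2 (a : Bicomplex) : (-a).z2 = -a.z2 := rfl
@[simp] theorem mul_z1 (a b : Bicomplex) :
    (a * b).z1 = a.z1 * b.z1 - a.z2 * b.z2 := rfl
@[simp] theorem mul_z2 (a b : Bicomplex) :
    (a * b).z2 = a.z1 * b.z2 + a.z2 * b.z1 := rfl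

instance : CommRing Bicomplex where
  add_assoc a b c := by ext <;> simp <;> ring
  zero_add a := by ext <;> simp
  add_zero a := by ext <;> simp
  add_comm a b := by ext <;> simp <;> ring
  neg_add_cancel a := by ext <;> simp
  mul_assoc a b c := by ext <;> simp <;> ring
  one_mul a := by ext <;> simp
  mul_one a := by ext <;> simp
  left_distrib a b c := by ext <;> simp <;> ring
  right_distrib a b c := by ext <;> simp <;> ring
  mul_comm a b := by ext <;> simp <;> ring
  zero_mul a := by ext <;> simp
  mul_zero a := by ext <;> simp
  nsmul := nsmulRec
  zsmul := zsmulRec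

/-- The imaginary unit `i₁`. -/
def i1 : Bicomplex := ⟨Complex.I, 0⟩
/-- The imaginary unit `i₂`. -/
def i2 : Bicomplex := ⟨0, 1⟩
/-- The hyperbolic unit `j = i₁·i₂`. -/
def jj : Bicomplex := ⟨0, Complex.I⟩

/-- Embedding of `ℂ(i₁)` into the bicomplex numbers. -/
def ofC : ℂ →+* Bicomplex where
  toFun z := ⟨z, 0⟩
  map_one' := rfl
  map_mul' a b := by ext <;> simp
  map_zero' := rfl
  map_add' a b := by ext <;> simp

/-- Embedding of `ℝ` into the bicomplex numbers. -/
noncomputable def ofR : ℝ →+* Bicomplex := ofC.comp (algebraMap ℝ ℂ)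

@[simp] theorem ofC_z1 (z : ℂ) : (ofC z).z1 = z := rfl
@[simp] theorem ofC_z2 (z : ℂ) : (ofC z).z2 = 0 := rfl

/-- The first bicomplex conjugation: `(z₁ + z₂·i₂)^†₁ = conj z₁ + conj z₂ · i₂`. -/
def dag1 (w : Bicomplex) : Bicomplex :=
  ⟨(starRingEnd ℂ) w.z1, (starRingEnd ℂ) w.z2⟩

/-- The second bicomplex conjugation: `(z₁ + z₂·i₂)^†₂ = z₁ - z₂·i₂`. -/
def dag2 (w : Bicomplex) : Bicomplex := ⟨w.z1, -w.z2⟩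

/-- The third bicomplex conjugation: `(z₁ + z₂·i₂)^†₃ = conj z₁ - conj z₂ · i₂`. -/
def dag3 (w : Bicomplex) : Bicomplex :=
  ⟨(starRingEnd ℂ) w.z1, -(starRingEnd ℂ) w.z2⟩

/-- The idempotent `e₁ = (1+j)/2`. -/
noncomputable def e1 : Bicomplex := ⟨(1:ℂ)/2, Complex.I/2⟩
/-- The idempotent `e₂ = (1-j)/2`. -/
noncomputable def e2 : Bicomplex := ⟨(1:ℂ)/2, -(Complex.I/2)⟩

end Bicomplex

open Bicomplex in
/-- The null cone (set of zero divisors) of the bicomplex numbers is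
`{z·(i₁ + i₂) : z ∈ ℂ(i₁)} ∪ {z·(i₁ - i₂) : z ∈ ℂ(i₁)}`. -/
theorem null_cone_eq :
    {w : Bicomplex | ∃ v : Bicomplex, v ≠ 0 ∧ w * v = 0} =
      {w : Bicomplex | ∃ z : ℂ, w = ofC z * (i1 + i2)} ∪
      {w : Bicomplex | ∃ z : ℂ, w = ofC z * (i1 - i2)} := by

  ext w
  simp only [Set.mem_setOf_eq, Set.mem_union]
  constructor
  · rintro ⟨v, hv, hwv⟩
    have h1 : w.z1 * v.z1 - w.z2 * v.z2 = 0 := congrArg Bicomplex.z1 hwv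
    have h2 : w.z1 * v.z2 + w.z2 * v.z1 = 0 := congrArg Bicomplex.z2 hwv
    have hnc : w.z1 ^ 2 + w.z2 ^ 2 = 0 := by
      have hvne : v.z1 ≠ 0 ∨ v.z2 ≠ 0 := by
        by_contra h
        push_neg at h
        exact hv (Bicomplex.ext h.1 h.2)
      have e1 : (w.z1 ^ 2 + w.z2 ^ 2) * v.z1 = 0 := by
        have : (w.z1 ^ 2 + w.z2 ^ 2) * v.z1 =
            w.z1 * (w.z1 * v.z1 - w.z2 * v.z2) + w.z2 * (w.z1 * v.z2 + w.z2 * v.z1) := by ring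
        rw [this, h1, h2]; ring
      have e2 : (w.z1 ^ 2 + w.z2 ^ 2) * v.z2 = 0 := by
        have : (w.z1 ^ 2 + w.z2 ^ 2) * v.z2 =
            w.z1 * (w.z1 * v.z2 + w.z2 * v.z1) - w.z2 * (w.z1 * v.z1 - w.z2 * v.z2) := by ring
        rw [this, h1, h2]; ring
      rcases hvne with h | h
      · exact (mul_eq_zero.mp e1).resolve_right h
      · exact (mul_eq_zero.mp e2).resolve_right h
    have hsq : w.z1 ^ 2 = (Complex.I * w.z2) ^ 2 := by
      have : (Complex.I * w.z2) ^ 2 = -w.z2 ^ 2 := by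
        rw [mul_pow, Complex.I_sq]; ring
      rw [this]; linear_combination hnc
    rcases sq_eq_sq_iff_eq_or_eq_neg.mp hsq with h | h
    · left
      exact ⟨w.z2, by ext <;> simp [i1, i2, ofC, sub_eq_add_neg, h, mul_comm]⟩
    · right
      exact ⟨-w.z2, by ext <;> simp [i1, i2, ofC, sub_eq_add_neg, h, mul_comm]⟩
  · have hIne : (⟨Complex.I, -1⟩ : Bicomplex) ≠ 0 := by
      intro h
      have := congrArg Bicomplex.z2 h
      simp at this
    have hIne' : (⟨Complex.I, 1⟩ : Bicomplex) ≠ 0 := by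
      intro h
      have := congrArg Bicomplex.z2 h
      simp at this
    rintro (⟨z, rfl⟩ | ⟨z, rfl⟩)
    · exact ⟨⟨Complex.I, -1⟩, hIne, by ext <;> simp [i1, i2, ofC, sub_eq_add_neg, Complex.I_sq] <;> linear_combination z * Complex.I_sq⟩
    · exact ⟨⟨Complex.I, 1⟩, hIne', by ext <;> simp [i1, i2, ofC, sub_eq_add_neg, Complex.I_sq] <;> linear_combination z * Complex.I_sq⟩
end

section
/- For any bicomplex w, the fourth power of the real modulus satisfies |w|₁⁴ = w·w^†1·w^†2·w^†3; in particular w·w^†1·w^†2·w^†3 is a nonnegative real number. -/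
open Bicomplex in
/-- For any bicomplex `w`, `|w|₁⁴ = w·w^†₁·w^†₂·w^†₃`; in particular this
product is a nonnegative real number. -/
theorem real_modulus_pow_four (w : Bicomplex) :
    ofR (Real.sqrt (‖w.z1 ^ 2 + w.z2 ^ 2‖) ^ 4) =
      w * dag1 w * dag2 w * dag3 w ∧
    ∃ r : ℝ, 0 ≤ r ∧ w * dag1 w * dag2 w * dag3 w = ofR r := by
  have h4 : Real.sqrt (‖w.z1 ^ 2 + w.z2 ^ 2‖) ^ 4
      = Complex.normSq (w.z1 ^ 2 + w.z2 ^ 2) := by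
    rw [show (4:ℕ)=2*2 from rfl, pow_mul,
      Real.sq_sqrt (norm_nonneg _), Complex.sq_norm]
  have key : ofR (Complex.normSq (w.z1 ^ 2 + w.z2 ^ 2))
      = w * dag1 w * dag2 w * dag3 w := by
    have : ((Complex.normSq (w.z1 ^ 2 + w.z2 ^ 2) : ℝ) : ℂ)
        = (w.z1 ^ 2 + w.z2 ^ 2) * (starRingEnd ℂ) (w.z1 ^ 2 + w.z2 ^ 2) :=
      (Complex.mul_conj _).symm
    ext <;> simp [ofR, ofC, dag1, dag2, dag3, this] <;> ring
  exact ⟨h4 ▸ key, _, Complex.normSq_nonneg _, key.symm⟩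
end

section
/- For the bicomplex wave value ψ = e^{α + β·i1 + γ·i2 + δ·j} (α, β, γ, δ ∈ ℝ), written in the idempotent basis as ψ = ψ₊·e1 + ψ₋·e2 with ψ₊ = e^{(α+δ)+(β-γ)i1} and ψ₋ = e^{(α-δ)+(β+γ)i1}, the Euclidean norm satisfies |ψ|² = (|ψ₊|² + |ψ₋|²)/2 = e^{2α}·cosh(2δ). -/
open Bicomplex in
/-- For `ψ = e^{α + β·i₁ + γ·i₂ + δ·j} = ψ₊·e₁ + ψ₋·e₂` with
`ψ₊ = e^{(α+δ)+(β-γ)i₁}`, `ψ₋ = e^{(α-δ)+(β+γ)i₁}`, the Euclidean norm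
satisfies `|ψ|² = (|ψ₊|² + |ψ₋|²)/2 = e^{2α}·cosh(2δ)`. -/
theorem born_formula_norm (α β γ δ : ℝ)
    (ψ : Bicomplex)
    (hψ : ψ = ofC (Complex.exp (α + β * Complex.I)) *
        (ofC (Complex.cos (γ + δ * Complex.I)) +
          ofC (Complex.sin (γ + δ * Complex.I)) * i2))
    (ψp ψm : ℂ)
    (hp : ψp = Complex.exp ((α + δ) + (β - γ) * Complex.I))
    (hm : ψm = Complex.exp ((α - δ) + (β + γ) * Complex.I)) :
    ψ = ofC ψp * e1 + ofC ψm * e2 ∧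
    ‖ψ.z1‖ ^ 2 + ‖ψ.z2‖ ^ 2 =
      (‖ψp‖ ^ 2 + ‖ψm‖ ^ 2) / 2 ∧
    ‖ψ.z1‖ ^ 2 + ‖ψ.z2‖ ^ 2 =
      Real.exp (2 * α) * Real.cosh (2 * δ) := by
  set z : ℂ := (γ:ℂ) + δ * Complex.I with hz
  set E : ℂ := Complex.exp ((α:ℂ) + β * Complex.I) with hE
  have em : ψm = E * Complex.exp (z * Complex.I) := by
    rw [hm, hE, hz, ← Complex.exp_add]
    congr 1
    have : ((γ:ℂ) + δ * Complex.I) * Complex.I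
        = (γ:ℂ) * Complex.I + δ * (Complex.I * Complex.I) := by ring
    rw [this, Complex.I_mul_I]; push_cast; ring
  have ep : ψp = E * Complex.exp (-z * Complex.I) := by
    rw [hp, hE, hz, ← Complex.exp_add]
    congr 1
    have : (-((γ:ℂ) + δ * Complex.I)) * Complex.I
        = -((γ:ℂ) * Complex.I) - δ * (Complex.I * Complex.I) := by ring
    rw [this, Complex.I_mul_I]; push_cast; ring
  have hz1 : ψ.z1 = (ψp + ψm) / 2 := by
    rw [hψ]; simp [Complex.cos, i2, ep, em]; ring
  have hz2 : ψ.z2 = (ψp - ψm) * Complex.I / 2 := by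
    rw [hψ]; simp [Complex.sin, i2, ep, em]; ring
  have habs : ‖ψ.z1‖ ^ 2 + ‖ψ.z2‖ ^ 2 =
      (‖ψp‖ ^ 2 + ‖ψm‖ ^ 2) / 2 := by
    simp only [Complex.sq_norm, hz1, hz2]
    simp only [Complex.normSq_div, Complex.normSq_mul, Complex.normSq_I,
      Complex.normSq_add, Complex.normSq_sub]
    have : Complex.normSq 2 = 4 := by
      simp [Complex.normSq_apply]; norm_num
    rw [this]; ring
  have hpabs : ‖ψp‖ = Real.exp (α + δ) := by
    rw [hp, Complex.norm_exp]; congr 1; simp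
  have hmabs : ‖ψm‖ = Real.exp (α - δ) := by
    rw [hm, Complex.norm_exp]; congr 1; simp
  refine ⟨?_, habs, ?_⟩
  · ext
    · simp [e1, e2, hz1]; ring
    · simp [e1, e2, hz2]; ring
  · rw [habs, hpabs, hmabs, Real.cosh_eq]
    rw [sq, sq, ← Real.exp_add, ← Real.exp_add]
    have h1 : α + δ + (α + δ) = 2*α + 2*δ := by ring
    have h2 : α - δ + (α - δ) = 2*α + -(2*δ) := by ring
    rw [h1, h2, Real.exp_add, Real.exp_add]
    ring
end
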